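/- There exists a constant C > 0 such that for all x, y ∈ ℝ, |a''(x) − a''(y)| ≤ C |a(x) − a(y)|. -/

import Mathlib

open MeasureTheory Set Real

/-- There exists a constant `C > 0` such that for all `x, y ∈ ℝ`,
`|a''(x) − a''(y)| ≤ C |a(x) − a(y)|`, where `a(x) = ∫_{-∞}^x (1+ψ(y))^{-(1+ε)} dy`. -/
theorem stmt3 (ε : ℝ) (hε : 0 < ε) (ψ : ℝ → ℝ)
    (hψ : ContDiff ℝ 3 ψ) (hψ0 : ∀ y, 0 ≤ ψ y)
    (hψabs : ∀ y, 1 ≤ |y| → ψ y = |y|)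
    (a : ℝ → ℝ)
    (ha : ∀ x, a x = ∫ y in Set.Iic x, (1 + ψ y) ^ (-(1 + ε))) :
    ∃ C > 0, ∀ x y : ℝ,
      |iteratedDeriv 2 a x - iteratedDeriv 2 a y| ≤ C * |a x - a y| := by
  set c : ℝ := -(1 + ε) with hc
  set f : ℝ → ℝ := fun y => (1 + ψ y) ^ c with hfdef
  have hbase : ∀ y, 0 < 1 + ψ y := fun y => by have := hψ0 y; linarith
  have hfpos : ∀ y, 0 < f y := fun y => Real.rpow_pos_of_pos (hbase y) _
  have hfle1 : ∀ y, f y ≤ 1 := fun y =>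
    Real.rpow_le_one_of_one_le_of_nonpos (by have := hψ0 y; linarith) (by simp [hc]; linarith)
  have hfC : ContDiff ℝ 3 f := by
    rw [contDiff_iff_contDiffAt]
    intro x
    exact (contDiffAt_const.add hψ.contDiffAt).rpow_const_of_ne (hbase x).ne'
  have hfcont : Continuous f := hfC.continuous
  -- integrability of f
  have hgint : Integrable (fun y : ℝ => (1 + |y|) ^ c) := by
    have : Integrable (fun y : ℝ => (1 + ‖y‖) ^ (-(1 + ε))) :=
      integrable_one_add_norm (μ := volume) (E := ℝ) (by simp; linarith)
    simpa [hc] using this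
  have hfint : Integrable f := by
    refine ((hgint.const_mul (2 ^ (1 + ε))).mono' hfcont.aestronglyMeasurable ?_)
    filter_upwards with y
    rw [Real.norm_eq_abs, abs_of_pos (hfpos y)]
    rcases le_or_gt 1 |y| with h | h
    · rw [hfdef]
      simp only
      rw [hψabs y h]
      have h1 : (1:ℝ) ≤ 2 ^ (1 + ε) := Real.one_le_rpow one_le_two (by linarith)
      nlinarith [Real.rpow_pos_of_pos (show (0:ℝ) < 1 + |y| by positivity) c,
        Real.rpow_nonneg (show (0:ℝ) ≤ 1 + |y|by positivity) c]
    · have h2 : (1 + |y|) ^ (1 + ε) ≤ 2 ^ (1 + ε) :=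
        Real.rpow_le_rpow (by positivity) (by linarith) (by linarith)
      have h3 : (0:ℝ) < (1 + |y|) ^ (1 + ε) := Real.rpow_pos_of_pos (by positivity) _
      have h4 : (1 + |y|) ^ c = ((1 + |y|) ^ (1 + ε))⁻¹ := by
        rw [hc, Real.rpow_neg (by positivity)]
      calc f y ≤ 1 := hfle1 y
        _ ≤ 2 ^ (1 + ε) * (1 + |y|) ^ c := by
            rw [h4, mul_comm, inv_mul_eq_div, le_div_iff₀ h3, one_mul]
            exact h2
  have hsub : ∀ x y : ℝ, a x - a y = ∫ t in y..x, f t := by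
    intro x y
    rw [ha x, ha y]
    exact intervalIntegral.integral_Iic_sub_Iic hfint.integrableOn hfint.integrableOn
  have hderiva : ∀ x, HasDerivAt a (f x) x := by
    intro x
    have h1 : a = fun u => a 0 + ∫ t in (0:ℝ)..u, f t := by
      funext u
      have := hsub u 0
      linarith
    rw [h1]
    refine HasDerivAt.const_add _ ?_
    exact intervalIntegral.integral_hasDerivAt_right hfint.intervalIntegrable
      (hfcont.aestronglyMeasurable.stronglyMeasurableAtFilter) hfcont.continuousAt
  have hda : deriv a = f := funext fun x => (hderiva x).deriv
  have h2a : iteratedDeriv 2 a = deriv f := by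
    rw [show (2:ℕ) = 1 + 1 from rfl, iteratedDeriv_succ, iteratedDeriv_one, hda]
  set F : ℝ → ℝ := deriv f with hF
  set G : ℝ → ℝ := deriv F with hG
  have hFC : ContDiff ℝ 2 F := by
    have := (contDiff_succ_iff_deriv.mp (show ContDiff ℝ (2 + 1) f from hfC)).2.2
    exact this
  have hGcont : Continuous G := by
    have := (contDiff_succ_iff_deriv.mp (show ContDiff ℝ (1 + 1) F from hFC)).2.2
    exact this.continuous
  have hderivF : ∀ x, HasDerivAt F (G x) x :=
    fun x => ((hFC.differentiable (by norm_num)) x).hasDerivAt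
  -- key pointwise bound : |G y| ≤ K * f y
  obtain ⟨K, hKpos, hKb⟩ : ∃ K > 0, ∀ y, |G y| ≤ K * f y := by
    -- explicit computation outside [-1, 1]
    have key : ∀ s y : ℝ, (s = 1 ∨ s = -1) → 1 < s * y →
        G y = c * (c - 1) * (1 + s * y) ^ (c - 2) ∧ f y = (1 + s * y) ^ c := by
      intro s y hs hsy
      have hs2 : s * s = 1 := by rcases hs with rfl | rfl <;> norm_num
      set U : Set ℝ := {t | 1 < s * t} with hU
      have hUopen : IsOpen U := isOpen_Ioi.preimage (continuous_const.mul continuous_id)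
      have hmem : U ∈ nhds y := hUopen.mem_nhds hsy
      have habs : ∀ t ∈ U, ψ t = s * t := by
        intro t ht
        have h1 : (1 : ℝ) < s * t := ht
        have h2 : |t| = s * t := by
          rcases hs with rfl | rfl
          · rw [one_mul] at h1 ⊢; exact abs_of_pos (by linarith)
          · rw [neg_one_mul] at h1 ⊢; exact abs_of_neg (by linarith)
        rw [hψabs t (by rw [h2]; exact h1.le), h2]
      have hbpos : ∀ t ∈ U, (0 : ℝ) < 1 + s * t := by
        intro t ht; have : (1 : ℝ) < s * t := ht; linarith
      have hb : ∀ t : ℝ, HasDerivAt (fun u => 1 + s * u) s t := by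
        intro t
        simpa using ((hasDerivAt_id t).const_mul s).const_add 1
      have hd1 : ∀ t ∈ U, HasDerivAt (fun u => (1 + s * u) ^ c)
          (s * c * (1 + s * t) ^ (c - 1)) t := by
        intro t ht
        exact (hb t).rpow_const (Or.inl (hbpos t ht).ne')
      have hev : f =ᶠ[nhds y] fun t => (1 + s * t) ^ c := by
        filter_upwards [hmem] with t ht
        simp only [hfdef]
        rw [habs t ht]
      have hevF : F =ᶠ[nhds y] fun t => s * c * (1 + s * t) ^ (c - 1) := by
        refine hev.deriv.trans ?_
        filter_upwards [hmem] with t ht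
        exact (hd1 t ht).deriv
      have hd2 : HasDerivAt (fun t => s * c * (1 + s * t) ^ (c - 1))
          (c * (c - 1) * (1 + s * y) ^ (c - 2)) y := by
        have h := (((hb y).rpow_const (p := c - 1) (Or.inl (hbpos y hsy).ne'))).const_mul (s * c)
        refine h.congr_deriv ?_
        rw [show c - 1 - 1 = c - 2 by ring]
        linear_combination (c * (c - 1) * (1 + s * y) ^ (c - 2)) * hs2
      constructor
      · rw [hG, Filter.EventuallyEq.deriv_eq hevF]
        exact hd2.deriv
      · have hyU : y ∈ U := hsy
        simp only [hfdef]
        rw [habs y hyU]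
    -- bound on the compact part
    obtain ⟨M, hM⟩ := (isCompact_Icc (a := (-2 : ℝ)) (b := 2)).exists_bound_of_continuousOn
      hGcont.continuousOn
    obtain ⟨y0, hy0, hmin⟩ := (isCompact_Icc (a := (-2 : ℝ)) (b := 2)).exists_isMinOn
      ⟨0, by norm_num⟩ hfcont.continuousOn
    have hm : 0 < f y0 := hfpos y0
    set K1 : ℝ := (max M 0 + 1) / f y0 with hK1
    have hK1pos : 0 < K1 := by positivity
    set K2 : ℝ := (1 + ε) * (2 + ε) with hK2
    have hK2pos : 0 < K2 := by positivity
    have hcc : c * (c - 1) = K2 := by rw [hK2, hc]; ring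
    refine ⟨max K1 K2, lt_of_lt_of_le hK1pos (le_max_left _ _), ?_⟩
    intro y
    rcases le_or_gt |y| 2 with h | h
    · -- compact case
      have hyI : y ∈ Icc (-2 : ℝ) 2 := abs_le.mp h
      have h1 : |G y| ≤ max M 0 + 1 := by
        have h2 := hM y hyI
        rw [Real.norm_eq_abs] at h2
        have h3 : M ≤ max M 0 := le_max_left _ _
        linarith
      calc |G y| ≤ max M 0 + 1 := h1
        _ = K1 * f y0 := by rw [hK1]; field_simp
        _ ≤ K1 * f y := by
            exact mul_le_mul_of_nonneg_left (isMinOn_iff.mp hmin y hyI) hK1pos.le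
        _ ≤ max K1 K2 * f y :=
            mul_le_mul_of_nonneg_right (le_max_left _ _) (hfpos y).le
    · -- outer case
      have h1 : (1 : ℝ) < |y| := by linarith
      have hsy : ∃ s : ℝ, (s = 1 ∨ s = -1) ∧ 1 < s * y := by
        rcases le_or_gt 0 y with hy | hy
        · exact ⟨1, Or.inl rfl, by rwa [one_mul, ← abs_of_nonneg hy]⟩
        · exact ⟨-1, Or.inr rfl, by rwa [neg_one_mul, ← abs_of_neg hy]⟩
      obtain ⟨s, hs, hsy⟩ := hsy
      obtain ⟨hGy, hfy⟩ := key s y hs hsy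
      have hbpos : (0 : ℝ) < 1 + s * y := by linarith
      have hb1 : (1 : ℝ) ≤ 1 + s * y := by linarith
      have hr : (1 + s * y) ^ (c - 2) ≤ (1 + s * y) ^ c :=
        Real.rpow_le_rpow_of_exponent_le hb1 (by linarith)
      have hrp : (0 : ℝ) < (1 + s * y) ^ (c - 2) := Real.rpow_pos_of_pos hbpos _
      calc |G y| = K2 * (1 + s * y) ^ (c - 2) := by
            rw [hGy, hcc, abs_of_pos (by positivity)]
        _ ≤ K2 * (1 + s * y) ^ c := mul_le_mul_of_nonneg_left hr hK2pos.le
        _ = K2 * f y := by rw [hfy]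
        _ ≤ max K1 K2 * f y :=
            mul_le_mul_of_nonneg_right (le_max_right _ _) (hfpos y).le
  refine ⟨K, hKpos, ?_⟩
  have main : ∀ x y : ℝ, y ≤ x → |F x - F y| ≤ K * |a x - a y| := by
    intro x y hyx
    have hGi : IntervalIntegrable G volume y x := hGcont.intervalIntegrable _ _
    have h1 : ∫ t in y..x, G t = F x - F y :=
      intervalIntegral.integral_eq_sub_of_hasDerivAt (fun t _ => hderivF t) hGi
    have h2 : |∫ t in y..x, G t| ≤ ∫ t in y..x, |G t| :=
      intervalIntegral.abs_integral_le_integral_abs hyx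
    have h3 : (∫ t in y..x, |G t|) ≤ ∫ t in y..x, K * f t := by
      apply intervalIntegral.integral_mono_on hyx (hGcont.abs.intervalIntegrable _ _)
        (hfint.intervalIntegrable.const_mul K)
      intro t _
      exact hKb t
    have h4 : (∫ t in y..x, K * f t) = K * (a x - a y) := by
      rw [hsub x y, intervalIntegral.integral_const_mul]
    have h5 : 0 ≤ a x - a y := by
      rw [hsub x y]
      apply intervalIntegral.integral_nonneg hyx
      intro t _; exact (hfpos t).le
    calc |F x - F y| = |∫ t in y..x, G t| := by rw [h1]
      _ ≤ ∫ t in y..x, |G t| := h2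
      _ ≤ ∫ t in y..x, K * f t := h3
      _ = K * (a x - a y) := h4
      _ = K * |a x - a y| := by rw [abs_of_nonneg h5]
  intro x y
  rw [h2a]
  rcases le_total y x with h | h
  · exact main x y h
  · rw [abs_sub_comm (F x), abs_sub_comm (a x)]
    exact main y x h
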